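/- arXiv:1507.04725 — 4 statements merged into one kernel-verified Lean document; each statement's English description precedes it below -/
import Mathlib

section
/- Let G be a d-regular graph with eigenvector A f = λ f, |λ| = 2√(d−1), and let θ = λ/2 (so θ² = d−1). Define T_θ f and T_{1+θ} f on directed edges by (T_c f)(x,y) = c f(y) − f(x). Then B(T_{1+θ} f) = θ·(T_{1+θ} f) + T_θ f, where B is the nonbacktracking operator. In particular, B has a 2×2 Jordan block for the eigenvalue θ. -/
open Finset

/-- Jordan block at the Ramanujan threshold: if `Af = λf` with `λ = 2θ`, `θ² = d−1`, then
`B(T_{1+θ} f) = θ·(T_{1+θ} f) + T_θ f`, where `B` is the nonbacktracking operator and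
`(T_c f)(x,y) = c f(y) − f(x)`. -/
theorem nonbacktracking_jordan_block {V : Type*} [Fintype V] [DecidableEq V]
    (G : SimpleGraph V) [DecidableRel G.Adj] (d : ℕ) (hd : 3 ≤ d)
    (hreg : G.IsRegularOfDegree d) (θ : ℝ) (hθ : θ ^ 2 = (d : ℝ) - 1)
    (f : V → ℂ) (hf : ∀ y, ∑ z ∈ G.neighborFinset y, f z = (2 * θ : ℝ) * f y) :
    ∀ x y, G.Adj x y →
      ∑ z ∈ (G.neighborFinset y).erase x, ((1 + θ : ℂ) * f z - f y)
        = (θ : ℂ) * ((1 + θ : ℂ) * f y - f x) + ((θ : ℂ) * f y - f x) := by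
  intro x y hxy
  have hx : x ∈ G.neighborFinset y := by
    rw [SimpleGraph.mem_neighborFinset]; exact hxy.symm
  have hcard : (G.neighborFinset y).card = d := hreg y
  have hsum : ∑ z ∈ (G.neighborFinset y).erase x, ((1 + θ : ℂ) * f z - f y)
      = (∑ z ∈ G.neighborFinset y, ((1 + θ : ℂ) * f z - f y))
        - ((1 + θ : ℂ) * f x - f y) := by
    rw [eq_sub_iff_add_eq, Finset.sum_erase_add _ _ hx]
  rw [hsum, Finset.sum_sub_distrib, ← Finset.mul_sum, hf y, Finset.sum_const, hcard]
  have hθC : ((θ : ℂ)) ^ 2 = (d : ℂ) - 1 := by exact_mod_cast hθ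
  have hd1 : (d : ℂ) = (θ : ℂ) ^ 2 + 1 := by rw [hθC]; ring
  simp only [nsmul_eq_mul]
  rw [hd1]
  push_cast
  ring
end

section
/- Let G be a finite connected d-regular graph on n vertices (d ≥ 3) and define, for x ∈ V, the 'star vector' s⁻_x on directed edges by s⁻_x(u,v) = 1 if u = x, −1 if v = x, and 0 otherwise. Then the span S⁻ of {s⁻_x : x ∈ V} has dimension n − 1, and every w in the antisymmetric space {w : w(x,y) = −w(y,x)} that is orthogonal to S⁻ satisfies B w = w. -/
open Finset Matrix

/-- The nonbacktracking matrix `B` on directed edges of `G`. -/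
def nbMatrix {V : Type*} (G : SimpleGraph V) [DecidableRel G.Adj] [DecidableEq V] :
    Matrix {e : V × V // G.Adj e.1 e.2} {e : V × V // G.Adj e.1 e.2} ℂ :=
  fun e e' => if e.1.2 = e'.1.1 ∧ e.1.1 ≠ e'.1.2 then 1 else 0

/-- The star vector `s⁻_x` on directed edges: `1` on edges out of `x`, `−1` on edges into `x`. -/
def starMinus {V : Type*} [DecidableEq V] (G : SimpleGraph V) [DecidableRel G.Adj] (x : V) :
    {e : V × V // G.Adj e.1 e.2} → ℂ :=
  fun e => if e.1.1 = x then 1 else if e.1.2 = x then -1 else 0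

/-- The gradient-like map `g ↦ ((u,v) ↦ g u - g v)`. -/
def gradMap {V : Type*} [DecidableEq V] (G : SimpleGraph V) [DecidableRel G.Adj] :
    (V → ℂ) →ₗ[ℂ] ({e : V × V // G.Adj e.1 e.2} → ℂ) where
  toFun g e := g e.1.1 - g e.1.2
  map_add' g h := by funext e; simp [Pi.add_apply]; ring
  map_smul' c g := by funext e; simp [Pi.smul_apply, smul_eq_mul]; ring

theorem gradMap_single {V : Type*} [DecidableEq V] (G : SimpleGraph V) [DecidableRel G.Adj]
    (x : V) : gradMap G (Pi.single x 1) = starMinus G x := by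
  funext e
  have hne : e.1.1 ≠ e.1.2 := e.2.ne
  simp only [gradMap, LinearMap.coe_mk, AddHom.coe_mk, starMinus, Pi.single_apply]
  split_ifs with h1 h2 <;> simp_all

/-- The span of the star vectors `{s⁻_x}` has dimension `n − 1`, and every antisymmetric
`w` orthogonal to it satisfies `B w = w`. -/
theorem star_space_minus {V : Type*} [Fintype V] [DecidableEq V]
    (G : SimpleGraph V) [DecidableRel G.Adj] (d : ℕ) (hd : 3 ≤ d)
    (hreg : G.IsRegularOfDegree d) (hconn : G.Connected) :
    Module.finrank ℂ (Submodule.span ℂ (Set.range (starMinus G))) = Fintype.card V - 1 ∧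
    ∀ w : {e : V × V // G.Adj e.1 e.2} → ℂ,
      (∀ x y (h : G.Adj x y), w ⟨(x, y), h⟩ = -w ⟨(y, x), h.symm⟩) →
      (∀ x : V, ∑ e, starRingEnd ℂ (starMinus G x e) * w e = 0) →
      (nbMatrix G).mulVec w = w := by
  haveI : Nonempty V := hconn.nonempty
  constructor
  · -- dimension part
    have hrange : LinearMap.range (gradMap G) =
        Submodule.span ℂ (Set.range (starMinus G)) := by
      rw [LinearMap.range_eq_map, ← (Pi.basisFun ℂ V).span_eq, Submodule.map_span,
        ← Set.range_comp]
      have hfun : ⇑(gradMap G) ∘ ⇑(Pi.basisFun ℂ V) = starMinus G := by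
        funext x
        simp only [Function.comp_apply, Pi.basisFun_apply]
        exact gradMap_single G x
      rw [hfun]
    have hker : LinearMap.ker (gradMap G) = Submodule.span ℂ {(1 : V → ℂ)} := by
      apply le_antisymm
      · intro g hg
        have hadj : ∀ a b : V, G.Adj a b → g a = g b := by
          intro a b hab
          have := congrFun (LinearMap.mem_ker.mp hg) ⟨(a, b), hab⟩
          simp only [gradMap, LinearMap.coe_mk, AddHom.coe_mk, Pi.zero_apply] at this
          exact sub_eq_zero.mp this
        have hwalk : ∀ u v : V, G.Walk u v → g u = g v := by
          intro u v p
          induction p with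
          | nil => rfl
          | cons h _ ih => rw [hadj _ _ h, ih]
        obtain v₀ := Classical.arbitrary V
        rw [Submodule.mem_span_singleton]
        refine ⟨g v₀, ?_⟩
        funext u
        have : g u = g v₀ := hwalk u v₀ (hconn u v₀).some
        simp [this]
      · rw [Submodule.span_singleton_le_iff_mem, LinearMap.mem_ker]
        funext e
        simp [gradMap]
    have hrn := LinearMap.finrank_range_add_finrank_ker (gradMap G)
    rw [hrange, hker] at hrn
    have h1 : Module.finrank ℂ (Submodule.span ℂ {(1 : V → ℂ)}) = 1 := by
      apply finrank_span_singleton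
      intro h
      have := congrFun h (Classical.arbitrary V)
      simp at this
    have hcard : Module.finrank ℂ (V → ℂ) = Fintype.card V := by
      simp [Module.finrank_pi]
    rw [h1, hcard] at hrn
    have : 1 ≤ Fintype.card V := Fintype.card_pos
    omega
  · intro w hanti horth
    -- key: for each x, the sum of w over edges leaving x is 0
    have key : ∀ x : V,
        (∑ e : {e : V × V // G.Adj e.1 e.2}, if e.1.1 = x then w e else 0) = 0 := by
      intro x
      set S := ∑ e : {e : V × V // G.Adj e.1 e.2}, if e.1.1 = x then w e else 0 with hS
      have h1 := horth x
      have hsplit : ∑ e, starRingEnd ℂ (starMinus G x e) * w e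
          = S + ∑ e : {e : V × V // G.Adj e.1 e.2}, (if e.1.2 = x then -w e else 0) := by
        rw [hS, ← Finset.sum_add_distrib]
        apply Finset.sum_congr rfl
        intro e _
        have hne : e.1.1 ≠ e.1.2 := e.2.ne
        simp only [starMinus]
        split_ifs with ha hb
        · exact absurd (ha.trans hb.symm) hne
        · simp
        · simp
        · simp
      have hrev : (∑ e : {e : V × V // G.Adj e.1 e.2}, if e.1.2 = x then -w e else 0) = S := by
        rw [hS]
        apply Fintype.sum_equiv ⟨fun e => ⟨(e.1.2, e.1.1), e.2.symm⟩,
          fun e => ⟨(e.1.2, e.1.1), e.2.symm⟩, fun e => rfl, fun e => rfl⟩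
        intro e
        show (if (e : V × V).2 = x then -w e else 0)
            = if (e : V × V).2 = x then w ⟨((e : V × V).2, (e : V × V).1), e.2.symm⟩ else 0
        split_ifs with h
        · rw [neg_eq_iff_eq_neg]
          exact hanti e.1.1 e.1.2 e.2
        · rfl
      rw [hsplit, hrev] at h1
      have h2 : (2 : ℂ) * S = 0 := by linear_combination h1
      exact (mul_eq_zero.mp h2).resolve_left two_ne_zero
    funext e
    obtain ⟨⟨u, v⟩, he⟩ := e
    have hsum : (nbMatrix G).mulVec w ⟨(u, v), he⟩
        = ∑ e' : {e : V × V // G.Adj e.1 e.2},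
            if e'.1.1 = v ∧ e'.1.2 ≠ u then w e' else 0 := by
      simp only [Matrix.mulVec, dotProduct, nbMatrix]
      apply Finset.sum_congr rfl
      intro e' _
      by_cases h : e'.1.1 = v ∧ e'.1.2 ≠ u
      · rw [if_pos h, if_pos ⟨h.1.symm, fun hc => h.2 hc.symm⟩, one_mul]
      · rw [if_neg h, if_neg, zero_mul]
        intro hc
        exact h ⟨hc.1.symm, fun hc2 => hc.2 hc2.symm⟩
    have hdecomp : (∑ e' : {e : V × V // G.Adj e.1 e.2}, if e'.1.1 = v then w e' else 0)
        = (∑ e' : {e : V × V // G.Adj e.1 e.2}, if e'.1.1 = v ∧ e'.1.2 ≠ u then w e' else 0)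
          + w ⟨(v, u), he.symm⟩ := by
      have : ∀ e' : {e : V × V // G.Adj e.1 e.2},
          (if e'.1.1 = v then w e' else 0)
            = (if e'.1.1 = v ∧ e'.1.2 ≠ u then w e' else 0)
              + (if e' = ⟨(v, u), he.symm⟩ then w e' else 0) := by
        intro e'
        by_cases h1 : e'.1.1 = v
        · by_cases h2 : e'.1.2 = u
          · have heq : e' = ⟨(v, u), he.symm⟩ := by
              apply Subtype.ext
              exact Prod.ext h1 h2
            rw [heq]
            simp
          · have hne : e' ≠ ⟨(v, u), he.symm⟩ := by
              intro hc; apply h2; rw [hc]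
            simp [h1, h2, hne]
        · have hne : e' ≠ ⟨(v, u), he.symm⟩ := by
            intro hc; apply h1; rw [hc]
          simp [h1, hne]
      rw [Finset.sum_congr rfl (fun e' _ => this e'), Finset.sum_add_distrib]
      congr 1
      simp [Finset.sum_ite_eq']
    have hk := key v
    rw [hdecomp] at hk
    have hanti' := hanti u v he
    rw [hsum]
    linear_combination hk - hanti'
end

section
/- Let G be a finite connected d-regular graph on n vertices (d ≥ 3) and define, for x ∈ V, s⁺_x(u,v) = 1 if u = x or v = x, and 0 otherwise. Then every w in the symmetric space {w : w(x,y) = w(y,x)} orthogonal to the span of {s⁺_x : x ∈ V} satisfies B w = −w; and the span of {s⁺_x} has dimension n if G is non-bipartite and n−1 if G is bipartite. -/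
open Finset Matrix

/-- The star vector `s⁺_x` on directed edges: `1` on edges out of or into `x`, `0` otherwise. -/
def starPlus {V : Type*} [DecidableEq V] (G : SimpleGraph V) [DecidableRel G.Adj] (x : V) :
    {e : V × V // G.Adj e.1 e.2} → ℂ :=
  fun e => if e.1.1 = x then 1 else if e.1.2 = x then 1 else 0

lemma walk_sign {V : Type*} {G : SimpleGraph V} (a : V → ℂ)
    (hA : ∀ x y, G.Adj x y → a x + a y = 0)
    {x y : V} (p : G.Walk x y) : a y = a x ∨ a y = -a x := by
  induction p with
  | nil => left; rfl
  | @cons x z y h p ih =>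
    have hz : a z = -a x := eq_neg_of_add_eq_zero_right (hA _ _ h)
    rcases ih with h1 | h1
    · right; rw [h1, hz]
    · left; rw [h1, hz, neg_neg]

lemma walk_color {V : Type*} {G : SimpleGraph V} (c : V → Bool)
    (hc : ∀ x y, G.Adj x y → c x ≠ c y) (a : V → ℂ)
    (hA : ∀ x y, G.Adj x y → a x + a y = 0)
    {x y : V} (p : G.Walk x y) : a y = if c y = c x then a x else -a x := by
  induction p with
  | nil => simp
  | @cons x z y h p ih =>
    have hz : a z = -a x := eq_neg_of_add_eq_zero_right (hA _ _ h)
    have hcz := hc _ _ h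
    rw [ih, hz]
    rcases Bool.eq_false_or_eq_true (c x) with h1 | h1 <;>
      rcases Bool.eq_false_or_eq_true (c y) with h2 | h2 <;>
        rcases Bool.eq_false_or_eq_true (c z) with h3 | h3 <;>
          simp_all

/-- Every symmetric `w` orthogonal to the span of `{s⁺_x}` satisfies `B w = −w`; and that
span has dimension `n−1` if `G` is bipartite and `n` otherwise. -/
theorem star_space_plus {V : Type*} [Fintype V] [DecidableEq V]
    (G : SimpleGraph V) [DecidableRel G.Adj] (d : ℕ) (hd : 3 ≤ d)
    (hreg : G.IsRegularOfDegree d) (hconn : G.Connected) :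
    (∀ w : {e : V × V // G.Adj e.1 e.2} → ℂ,
      (∀ x y (h : G.Adj x y), w ⟨(x, y), h⟩ = w ⟨(y, x), h.symm⟩) →
      (∀ x : V, ∑ e, starRingEnd ℂ (starPlus G x e) * w e = 0) →
      (nbMatrix G).mulVec w = -w) ∧
    ((∃ c : V → Bool, ∀ x y, G.Adj x y → c x ≠ c y) →
      Module.finrank ℂ (Submodule.span ℂ (Set.range (starPlus G))) = Fintype.card V - 1) ∧
    (¬(∃ c : V → Bool, ∀ x y, G.Adj x y → c x ≠ c y) →
      Module.finrank ℂ (Submodule.span ℂ (Set.range (starPlus G))) = Fintype.card V) := by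
  set f := Fintype.linearCombination ℂ (starPlus G) with hf
  have hspan : Submodule.span ℂ (Set.range (starPlus G)) = LinearMap.range f :=
    (Fintype.range_linearCombination ℂ (starPlus G)).symm
  have hsum : ∀ (a : V → ℂ) (e : {e : V × V // G.Adj e.1 e.2}),
      f a e = a e.1.1 + a e.1.2 := by
    intro a e
    have hne : e.1.1 ≠ e.1.2 := e.2.ne
    rw [hf, Fintype.linearCombination_apply, Finset.sum_apply]
    have key : ∀ i, (a i • starPlus G i) e
        = (if i = e.1.1 then a i else 0) + (if i = e.1.2 then a i else 0) := by
      intro i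
      simp only [Pi.smul_apply, smul_eq_mul, starPlus]
      by_cases h1 : e.1.1 = i
      · rw [if_pos h1, if_pos h1.symm, if_neg (fun h : i = e.1.2 => hne (h1.trans h)),
          mul_one, add_zero]
      · rw [if_neg h1, if_neg (fun h : i = e.1.1 => h1 h.symm)]
        by_cases h2 : e.1.2 = i
        · rw [if_pos h2, if_pos h2.symm, mul_one, zero_add]
        · rw [if_neg h2, if_neg (fun h : i = e.1.2 => h2 h.symm), mul_zero, zero_add]
    rw [Finset.sum_congr rfl fun i _ => key i, Finset.sum_add_distrib,
      Finset.sum_ite_eq', Finset.sum_ite_eq']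
    simp
  have hker : ∀ a : V → ℂ, f a = 0 ↔ ∀ x y, G.Adj x y → a x + a y = 0 := by
    intro a
    constructor
    · intro h x y hxy
      have := congrFun h ⟨(x, y), hxy⟩
      rwa [hsum] at this
    · intro h
      funext e
      rw [hsum]
      exact h _ _ e.2
  have hrn := LinearMap.finrank_range_add_finrank_ker f
  rw [Module.finrank_fintype_fun_eq_card] at hrn
  obtain ⟨x₀⟩ := hconn.nonempty
  refine ⟨?_, ?_, ?_⟩
  · -- Part 1
    intro w hsym horth
    funext e
    obtain ⟨⟨x, y⟩, hxy⟩ := e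
    have hS : ∑ e : {e : V × V // G.Adj e.1 e.2}, (if e.1.1 = y then w e else 0) = 0 := by
      have h0 := horth y
      have hsplit : ∀ e : {e : V × V // G.Adj e.1 e.2},
          starRingEnd ℂ (starPlus G y e) * w e
            = (if e.1.1 = y then w e else 0) + (if e.1.2 = y then w e else 0) := by
        intro e
        have hne : e.1.1 ≠ e.1.2 := e.2.ne
        simp only [starPlus]
        split_ifs with h1 h2 <;>
          first
          | exact absurd (h1.trans h2.symm) hne
          | simp
      rw [Finset.sum_congr rfl fun e _ => hsplit e, Finset.sum_add_distrib] at h0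
      have hrev : ∑ e : {e : V × V // G.Adj e.1 e.2}, (if e.1.2 = y then w e else 0)
          = ∑ e : {e : V × V // G.Adj e.1 e.2}, (if e.1.1 = y then w e else 0) := by
        apply Fintype.sum_equiv ⟨fun e => ⟨(e.1.2, e.1.1), e.2.symm⟩,
          fun e => ⟨(e.1.2, e.1.1), e.2.symm⟩, fun e => rfl, fun e => rfl⟩
        rintro ⟨⟨u, v⟩, huv⟩
        simp only [Equiv.coe_fn_mk]
        rw [← hsym u v huv]
      rw [hrev] at h0
      exact add_self_eq_zero.mp h0
    have hterm : ∀ e' : {e : V × V // G.Adj e.1 e.2},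
        (if y = e'.1.1 ∧ x ≠ e'.1.2 then (1:ℂ) else 0) * w e'
          = (if e'.1.1 = y then w e' else 0)
            - (if e' = ⟨(y, x), hxy.symm⟩ then w e' else 0) := by
      rintro ⟨⟨u, v⟩, huv⟩
      by_cases h1 : u = y
      · subst h1
        by_cases h2 : v = x
        · subst h2
          simp [Subtype.ext_iff]
        · have hne : (⟨(u, v), huv⟩ : {e : V × V // G.Adj e.1 e.2})
              ≠ ⟨(u, x), hxy.symm⟩ := by
            simp [Subtype.ext_iff, h2]
          simp [h2, hne, Ne.symm h2]
      · have hne : (⟨(u, v), huv⟩ : {e : V × V // G.Adj e.1 e.2})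
            ≠ ⟨(y, x), hxy.symm⟩ := by
          simp [Subtype.ext_iff, h1]
        simp [h1, hne, Ne.symm h1]
    show ∑ e', nbMatrix G ⟨(x, y), hxy⟩ e' * w e' = _
    simp only [nbMatrix]
    rw [Finset.sum_congr rfl fun e' _ => hterm e', Finset.sum_sub_distrib, hS,
      Finset.sum_ite_eq']
    simp [hsym x y hxy]
  · -- bipartite case
    rintro ⟨c, hc⟩
    set v : V → ℂ := fun x => if c x then 1 else -1 with hv
    have hvx : ∀ x, v x = if c x then 1 else -1 := fun _ => rfl
    have hvka : ∀ x y, G.Adj x y → v x + v y = 0 := by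
      intro x y hxy
      have h := hc _ _ hxy
      rw [hvx, hvx]
      cases hcx : c x <;> cases hcy : c y <;> simp [hcx, hcy] at h ⊢ <;> ring
    have hvne : v ≠ 0 := by
      intro h
      have h0 := congrFun h x₀
      rw [hvx] at h0
      cases hcx : c x₀ <;> simp [hcx] at h0
    have hkereq : LinearMap.ker f = Submodule.span ℂ {v} := by
      apply le_antisymm
      · intro a ha
        rw [LinearMap.mem_ker, hker] at ha
        have key : a = (a x₀ * v x₀) • v := by
          funext x
          obtain ⟨p⟩ := hconn.preconnected x₀ x
          have hx := walk_color c hc a ha p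
          simp only [Pi.smul_apply, smul_eq_mul, hvx]
          rw [hx]
          cases hcx : c x <;> cases hcx0 : c x₀ <;> simp [hcx, hcx0] <;> ring
        rw [key]
        exact Submodule.smul_mem _ _ (Submodule.mem_span_singleton_self v)
      · rw [Submodule.span_le, Set.singleton_subset_iff]
        rw [SetLike.mem_coe, LinearMap.mem_ker, hker]
        exact hvka
    rw [hspan]
    rw [hkereq, finrank_span_singleton hvne] at hrn
    omega
  · -- non-bipartite case
    intro hbip
    classical
    have hkereq : LinearMap.ker f = ⊥ := by
      rw [LinearMap.ker_eq_bot']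
      intro a ha
      rw [hker] at ha
      by_contra hne
      obtain ⟨z, hz⟩ := Function.ne_iff.mp hne
      simp only [Pi.zero_apply] at hz
      apply hbip
      refine ⟨fun x => if a x = a z then true else false, ?_⟩
      intro x y hxy hcc'
      replace hcc : (if a x = a z then true else false)
          = (if a y = a z then true else false) := hcc'
      have ha0 : a z ≠ -a z := fun h => hz (by linear_combination h / 2)
      obtain ⟨p⟩ := hconn.preconnected z x
      have hy : a y = -a x := eq_neg_of_add_eq_zero_right (ha _ _ hxy)
      rcases walk_sign a ha p with h1 | h1
      · have hay : a y ≠ a z := by rw [hy, h1]; exact fun h => ha0 h.symm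
        rw [if_pos h1, if_neg hay] at hcc
        exact Bool.noConfusion hcc
      · have hax : a x ≠ a z := by rw [h1]; exact fun h => ha0 h.symm
        have hay : a y = a z := by rw [hy, h1, neg_neg]
        rw [if_neg hax, if_pos hay] at hcc
        exact Bool.noConfusion hcc
    rw [hspan]
    rw [hkereq, finrank_bot] at hrn
    omega
end

section
/- Let G be a finite d-regular graph, B its nonbacktracking operator, and C := (d−1)·B^{-1} + B. Then B is invertible, C is symmetric, and explicitly C_{(u,v),(x,y)} = 1 if (v = x and u ≠ y) or (y = u and v ≠ x), C_{(u,v),(x,y)} = −(d−2) if (u,v) = (y,x), and 0 otherwise. -/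
open Finset Matrix

/-- The nonbacktracking matrix `B` (real entries) on directed edges of `G`. -/
def nbMatrixR {V : Type*} (G : SimpleGraph V) [DecidableRel G.Adj] [DecidableEq V] :
    Matrix {e : V × V // G.Adj e.1 e.2} {e : V × V // G.Adj e.1 e.2} ℝ :=
  fun e e' => if e.1.2 = e'.1.1 ∧ e.1.1 ≠ e'.1.2 then 1 else 0

/-- Explicit inverse of the nonbacktracking matrix. -/
noncomputable def nbInvR {V : Type*} (G : SimpleGraph V) [DecidableRel G.Adj] [DecidableEq V]
    (d : ℕ) :
    Matrix {e : V × V // G.Adj e.1 e.2} {e : V × V // G.Adj e.1 e.2} ℝ :=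
  fun e e' => (if e.1.1 = e'.1.2 then ((d : ℝ) - 1)⁻¹ else 0) -
    (if e.1.1 = e'.1.2 ∧ e.1.2 = e'.1.1 then 1 else 0)

lemma nb_mul_inv {V : Type*} [Fintype V] [DecidableEq V]
    (G : SimpleGraph V) [DecidableRel G.Adj] (d : ℕ) (hd : 3 ≤ d)
    (hreg : G.IsRegularOfDegree d) : nbMatrixR G * nbInvR G d = 1 := by
  have hd1 : ((d : ℝ) - 1) ≠ 0 := by
    have : (3 : ℝ) ≤ d := by exact_mod_cast hd
    linarith
  ext e e''
  obtain ⟨⟨u, v⟩, huv⟩ := e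
  obtain ⟨⟨x, w⟩, hxw⟩ := e''
  rw [Matrix.mul_apply]
  have hre : ∀ e' : {e : V × V // G.Adj e.1 e.2},
      nbMatrixR G ⟨(u,v), huv⟩ e' * nbInvR G d e' ⟨(x,w), hxw⟩ =
      (fun p : V × V => (if v = p.1 ∧ u ≠ p.2 then (1:ℝ) else 0) *
        ((if p.1 = w then ((d : ℝ) - 1)⁻¹ else 0) -
          (if p.1 = w ∧ p.2 = x then 1 else 0))) e'.1 := fun e' => rfl
  rw [Finset.sum_congr rfl (fun e' _ => hre e')]
  rw [← Finset.sum_subtype (Finset.univ.filter (fun p : V × V => G.Adj p.1 p.2))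
      (by simp) (fun p : V × V => (if v = p.1 ∧ u ≠ p.2 then (1:ℝ) else 0) *
        ((if p.1 = w then ((d : ℝ) - 1)⁻¹ else 0) -
          (if p.1 = w ∧ p.2 = x then 1 else 0)))]
  rw [Finset.sum_filter, Fintype.sum_prod_type]
  rw [Finset.sum_eq_single v (fun a _ ha => by simp [Ne.symm ha])
      (fun h => absurd (Finset.mem_univ v) h)]
  by_cases hvw : v = w
  · subst hvw
    have hstep : ∀ b : V,
        (if G.Adj v b then (if v = v ∧ u ≠ b then (1:ℝ) else 0) *
          ((if v = v then ((d : ℝ) - 1)⁻¹ else 0) -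
            (if v = v ∧ b = x then 1 else 0)) else 0) =
        (if b ∈ (G.neighborFinset v).erase u then
          (((d : ℝ) - 1)⁻¹ - (if b = x then 1 else 0)) else 0) := by
      intro b
      by_cases hb : G.Adj v b <;> by_cases hub : u = b <;>
        simp [hb, hub, SimpleGraph.mem_neighborFinset, Ne.symm, eq_comm]
    rw [Finset.sum_congr rfl (fun b _ => hstep b)]
    rw [Finset.sum_ite_mem, Finset.univ_inter, Finset.sum_sub_distrib,
      Finset.sum_const, Finset.sum_ite_eq' ((G.neighborFinset v).erase u) x]
    have hcard : ((G.neighborFinset v).erase u).card = d - 1 := by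
      rw [Finset.card_erase_of_mem (by simpa [SimpleGraph.mem_neighborFinset] using huv.symm)]
      rw [← hreg v, SimpleGraph.card_neighborFinset_eq_degree]
    rw [hcard]
    have hxmem : x ∈ (G.neighborFinset v).erase u ↔ x ≠ u := by
      simp [SimpleGraph.mem_neighborFinset, hxw.symm]
    rw [Matrix.one_apply]
    have hd' : ((d : ℝ) - 1) = ((d - 1 : ℕ) : ℝ) := by
      have : 1 ≤ d := by omega
      push_cast [this]
      ring
    by_cases hx : x = u
    · rw [if_neg (by simp [hxmem, hx]), if_pos (by simp [Subtype.ext_iff, Prod.ext_iff, hx])]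
      rw [nsmul_eq_mul, ← hd', mul_inv_cancel₀ hd1]
      ring
    · rw [if_pos (hxmem.mpr hx),
        if_neg (by simp [Subtype.ext_iff, Prod.ext_iff]; rintro h; exact absurd h.symm hx)]
      rw [nsmul_eq_mul, ← hd', mul_inv_cancel₀ hd1]
      ring
  · have h0 : (⟨(u,v), huv⟩ : {e : V × V // G.Adj e.1 e.2}) ≠ ⟨(x,w), hxw⟩ := by
      intro h; exact hvw (by simpa using congrArg (fun z => z.1.2) h)
    simp [hvw, Matrix.one_apply, h0]

/-- `B` is invertible, and `C := (d−1)B⁻¹ + B` is symmetric with explicit entries: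
`1` if `(v=x ∧ u≠y)` or `(y=u ∧ v≠x)`, `−(d−2)` if `(u,v)=(y,x)`, and `0` otherwise. -/
theorem symmetrized_nonbacktracking {V : Type*} [Fintype V] [DecidableEq V]
    (G : SimpleGraph V) [DecidableRel G.Adj] (d : ℕ) (hd : 3 ≤ d)
    (hreg : G.IsRegularOfDegree d) :
    IsUnit (nbMatrixR G) ∧
    ((d - 1 : ℝ) • (nbMatrixR G)⁻¹ + nbMatrixR G).IsSymm ∧
    (∀ e e' : {e : V × V // G.Adj e.1 e.2},
      ((d - 1 : ℝ) • (nbMatrixR G)⁻¹ + nbMatrixR G) e e' =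
        if (e.1.2 = e'.1.1 ∧ e.1.1 ≠ e'.1.2) ∨ (e'.1.2 = e.1.1 ∧ e.1.2 ≠ e'.1.1) then 1
        else if e.1.1 = e'.1.2 ∧ e.1.2 = e'.1.1 then -(d - 2 : ℝ)
        else 0) := by
  have hd1 : ((d : ℝ) - 1) ≠ 0 := by
    have : (3 : ℝ) ≤ d := by exact_mod_cast hd
    linarith
  have hBM := nb_mul_inv G d hd hreg
  have hUnit : IsUnit (nbMatrixR G) :=
    @isUnit_of_invertible _ _ _ (invertibleOfRightInverse _ _ hBM)
  have hinv : (nbMatrixR G)⁻¹ = nbInvR G d := Matrix.inv_eq_right_inv hBM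
  have hentry : ∀ e e' : {e : V × V // G.Adj e.1 e.2},
      ((d - 1 : ℝ) • (nbMatrixR G)⁻¹ + nbMatrixR G) e e' =
        if (e.1.2 = e'.1.1 ∧ e.1.1 ≠ e'.1.2) ∨ (e'.1.2 = e.1.1 ∧ e.1.2 ≠ e'.1.1) then 1
        else if e.1.1 = e'.1.2 ∧ e.1.2 = e'.1.1 then -(d - 2 : ℝ)
        else 0 := by
    intro e e'
    obtain ⟨⟨u, v⟩, huv⟩ := e
    obtain ⟨⟨x, w⟩, hxw⟩ := e'
    rw [hinv]
    simp only [Matrix.add_apply, Matrix.smul_apply, nbInvR, nbMatrixR, smul_eq_mul]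
    by_cases h1 : u = w <;> by_cases h2 : v = x
    · rw [if_pos h1, if_pos ⟨h1, h2⟩, if_neg (by tauto : ¬(v = x ∧ u ≠ w)),
        if_neg (by rintro (⟨-, h⟩ | ⟨-, h⟩); exacts [h h1, h h2]),
        if_pos ⟨h1, h2⟩]
      field_simp
      ring
    · rw [if_pos h1, if_neg (by tauto : ¬(u = w ∧ v = x)),
        if_neg (by tauto : ¬(v = x ∧ u ≠ w)),
        if_pos (Or.inr ⟨h1.symm, h2⟩)]
      field_simp
      ring
    · rw [if_neg h1, if_neg (by tauto : ¬(u = w ∧ v = x)),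
        if_pos ⟨h2, fun h => h1 h⟩, if_pos (Or.inl ⟨h2, fun h => h1 h⟩)]
      ring
    · rw [if_neg h1, if_neg (by tauto : ¬(u = w ∧ v = x)),
        if_neg (by tauto : ¬(v = x ∧ u ≠ w)),
        if_neg (by rintro (⟨h, -⟩ | ⟨h, -⟩); exacts [h2 h, h1 h.symm]),
        if_neg (by tauto : ¬(u = w ∧ v = x))]
      ring
  refine ⟨hUnit, ?_, hentry⟩
  rw [Matrix.IsSymm]
  ext i j
  rw [Matrix.transpose_apply, hentry, hentry]
  have hc1 : ((j.1.2 = i.1.1 ∧ j.1.1 ≠ i.1.2) ∨ (i.1.2 = j.1.1 ∧ j.1.2 ≠ i.1.1)) ↔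
      ((i.1.2 = j.1.1 ∧ i.1.1 ≠ j.1.2) ∨ (j.1.2 = i.1.1 ∧ i.1.2 ≠ j.1.1)) := by
    constructor <;> rintro (⟨h1, h2⟩ | ⟨h1, h2⟩)
    exacts [Or.inr ⟨h1, fun h => h2 h.symm⟩, Or.inl ⟨h1, fun h => h2 h.symm⟩,
      Or.inr ⟨h1, fun h => h2 h.symm⟩, Or.inl ⟨h1, fun h => h2 h.symm⟩]
  have hc2 : (j.1.1 = i.1.2 ∧ j.1.2 = i.1.1) ↔ (i.1.1 = j.1.2 ∧ i.1.2 = j.1.1) := by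
    constructor <;> rintro ⟨h1, h2⟩ <;> exact ⟨h2.symm, h1.symm⟩
  rw [if_congr hc1 rfl (if_congr hc2 rfl rfl)]
end
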